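/- Let u ∈ ℝ³ with u ≠ 0, v = u/√(1+|u|²), and ω ∈ S² with ω not parallel to v. Define ξ = −(ω·v)/|ω × v|² · ω × (ω × v). Then ξ·ω = 0 and the spherical (tangential) divergence of ξ over S² equals 1, i.e. ∂̸_ω · ξ = 1, where ∂̸_{ωⁱ} = (δⁱⱼ − ωᵢωʲ)∂_{ωʲ}. -/

import Mathlib

set_option maxHeartbeats 1000000

noncomputable def auxF (v : Fin 3 → ℝ) (i : Fin 3) : (Fin 3 → ℝ) → ℝ := fun w =>
  (-(w 0 * v 0 + w 1 * v 1 + w 2 * v 2) *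
    ((w 0 * v 0 + w 1 * v 1 + w 2 * v 2) * w i - (w 0 * w 0 + w 1 * w 1 + w 2 * w 2) * v i)) *
  ((w 0 * w 0 + w 1 * w 1 + w 2 * w 2) * (v 0 ^ 2 + v 1 ^ 2 + v 2 ^ 2) -
    (w 0 * v 0 + w 1 * v 1 + w 2 * v 2) * (w 0 * v 0 + w 1 * v 1 + w 2 * v 2))⁻¹

theorem auxF_fderiv (v ω : Fin 3 → ℝ)
    (hq : (ω 0 * ω 0 + ω 1 * ω 1 + ω 2 * ω 2) * (v 0 ^ 2 + v 1 ^ 2 + v 2 ^ 2) -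
      (ω 0 * v 0 + ω 1 * v 1 + ω 2 * v 2) * (ω 0 * v 0 + ω 1 * v 1 + ω 2 * v 2) ≠ 0) (i j : Fin 3) :
    fderiv ℝ (auxF v i) ω (Pi.single j 1) =
      ((-(v 0 * (if (0 : Fin 3) = j then (1:ℝ) else 0) + v 1 * (if (1 : Fin 3) = j then (1:ℝ) else 0)
            + v 2 * (if (2 : Fin 3) = j then (1:ℝ) else 0)) *
          ((ω 0 * v 0 + ω 1 * v 1 + ω 2 * v 2) * ω i - (ω 0 ^ 2 + ω 1 ^ 2 + ω 2 ^ 2) * v i)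
          - (ω 0 * v 0 + ω 1 * v 1 + ω 2 * v 2) *
            ((v 0 * (if (0 : Fin 3) = j then (1:ℝ) else 0) + v 1 * (if (1 : Fin 3) = j then (1:ℝ) else 0)
                + v 2 * (if (2 : Fin 3) = j then (1:ℝ) else 0)) * ω i
              + (ω 0 * v 0 + ω 1 * v 1 + ω 2 * v 2) * (if i = j then (1:ℝ) else 0)
              - 2 * (ω 0 * (if (0 : Fin 3) = j then (1:ℝ) else 0) + ω 1 * (if (1 : Fin 3) = j then (1:ℝ) else 0)
                + ω 2 * (if (2 : Fin 3) = j then (1:ℝ) else 0)) * v i)) *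
        ((ω 0 ^ 2 + ω 1 ^ 2 + ω 2 ^ 2) * (v 0 ^ 2 + v 1 ^ 2 + v 2 ^ 2) -
          (ω 0 * v 0 + ω 1 * v 1 + ω 2 * v 2) ^ 2)
       - (-(ω 0 * v 0 + ω 1 * v 1 + ω 2 * v 2) *
            ((ω 0 * v 0 + ω 1 * v 1 + ω 2 * v 2) * ω i - (ω 0 ^ 2 + ω 1 ^ 2 + ω 2 ^ 2) * v i)) *
          (2 * (ω 0 * (if (0 : Fin 3) = j then (1:ℝ) else 0) + ω 1 * (if (1 : Fin 3) = j then (1:ℝ) else 0)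
              + ω 2 * (if (2 : Fin 3) = j then (1:ℝ) else 0)) * (v 0 ^ 2 + v 1 ^ 2 + v 2 ^ 2)
            - 2 * (ω 0 * v 0 + ω 1 * v 1 + ω 2 * v 2) *
              (v 0 * (if (0 : Fin 3) = j then (1:ℝ) else 0) + v 1 * (if (1 : Fin 3) = j then (1:ℝ) else 0)
                + v 2 * (if (2 : Fin 3) = j then (1:ℝ) else 0)))) /
      ((ω 0 ^ 2 + ω 1 ^ 2 + ω 2 ^ 2) * (v 0 ^ 2 + v 1 ^ 2 + v 2 ^ 2) -
        (ω 0 * v 0 + ω 1 * v 1 + ω 2 * v 2) ^ 2) ^ 2 := by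
  have hw : ∀ k : Fin 3, HasFDerivAt (fun w : Fin 3 → ℝ => w k)
      (ContinuousLinearMap.proj (R := ℝ) (φ := fun _ : Fin 3 => ℝ) k) ω :=
    fun k => (ContinuousLinearMap.proj (R := ℝ) (φ := fun _ : Fin 3 => ℝ) k).hasFDerivAt
  have hN := (((hw 0).mul_const (v 0)).add ((hw 1).mul_const (v 1))).add ((hw 2).mul_const (v 2))
  have hS := (((hw 0).mul (hw 0)).add ((hw 1).mul (hw 1))).add ((hw 2).mul (hw 2))
  have hq' := (hS.mul_const (v 0 ^ 2 + v 1 ^ 2 + v 2 ^ 2)).sub (hN.mul hN)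
  have hn := hN.neg.mul ((hN.mul (hw i)).sub (hS.mul_const (v i)))
  have hinv : HasFDerivAt (fun w : Fin 3 → ℝ =>
      ((w 0 * w 0 + w 1 * w 1 + w 2 * w 2) * (v 0 ^ 2 + v 1 ^ 2 + v 2 ^ 2) -
        (w 0 * v 0 + w 1 * v 1 + w 2 * v 2) * (w 0 * v 0 + w 1 * v 1 + w 2 * v 2))⁻¹) _ ω :=
    (hasDerivAt_inv hq).comp_hasFDerivAt ω hq'
  have hf := hn.mul hinv
  rw [show fderiv ℝ (auxF v i) ω = _ from hf.fderiv]
  simp only [ContinuousLinearMap.add_apply, ContinuousLinearMap.sub_apply,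
    ContinuousLinearMap.smul_apply, ContinuousLinearMap.smulRight_apply,
    ContinuousLinearMap.coe_smul', ContinuousLinearMap.neg_apply,
    ContinuousLinearMap.proj_apply, Pi.smul_apply, Pi.single_apply, smul_eq_mul,
    Pi.add_apply, Pi.mul_apply, Pi.sub_apply, Pi.neg_apply]
  rw [show ((ω 0 * ω 0 + ω 1 * ω 1 + ω 2 * ω 2) * (v 0 ^ 2 + v 1 ^ 2 + v 2 ^ 2) -
      (ω 0 * v 0 + ω 1 * v 1 + ω 2 * v 2) * (ω 0 * v 0 + ω 1 * v 1 + ω 2 * v 2))⁻¹ =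
      ((ω 0 * ω 0 + ω 1 * ω 1 + ω 2 * ω 2) * (v 0 ^ 2 + v 1 ^ 2 + v 2 ^ 2) -
        (ω 0 * v 0 + ω 1 * v 1 + ω 2 * v 2) * (ω 0 * v 0 + ω 1 * v 1 + ω 2 * v 2)) *
      (((ω 0 * ω 0 + ω 1 * ω 1 + ω 2 * ω 2) * (v 0 ^ 2 + v 1 ^ 2 + v 2 ^ 2) -
        (ω 0 * v 0 + ω 1 * v 1 + ω 2 * v 2) * (ω 0 * v 0 + ω 1 * v 1 + ω 2 * v 2)) ^ 2)⁻¹ from by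
    field_simp]
  ring




/-- The vector field `ξ(ω) = −(ω·v)/|ω × v|² · ω × (ω × v)` with `v = u/√(1+|u|²)`
is tangential (`ξ·ω = 0`) and has tangential divergence `∂̸_ω · ξ = 1` on the
unit sphere, away from `ω` parallel to `v`. -/
theorem xi_tangential_divergence_one (u ω : Fin 3 → ℝ) (hu : u ≠ 0)
    (hω : ∑ i, ω i ^ 2 = 1)
    (hpar : crossProduct ω (fun i => u i / Real.sqrt (1 + ∑ k, u k ^ 2)) ≠ 0) :
    let v : Fin 3 → ℝ := fun i => u i / Real.sqrt (1 + ∑ k, u k ^ 2)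
    let ξ : (Fin 3 → ℝ) → Fin 3 → ℝ := fun w =>
      (-(∑ i, w i * v i) / ∑ i, (crossProduct w v) i ^ 2) •
        crossProduct w (crossProduct w v)
    (∑ i, ξ ω i * ω i = 0) ∧
    (∑ i, ∑ j, ((if i = j then (1 : ℝ) else 0) - ω i * ω j) *
        fderiv ℝ (fun w => ξ w i) ω (Pi.single j 1)) = 1 := by
  intro v ξ
  -- nonvanishing denominator
  have hcross : ∀ w, (∑ i, (crossProduct w v) i ^ 2) =
      (w 0 * w 0 + w 1 * w 1 + w 2 * w 2) * (v 0 ^ 2 + v 1 ^ 2 + v 2 ^ 2) -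
        (w 0 * v 0 + w 1 * v 1 + w 2 * v 2) * (w 0 * v 0 + w 1 * v 1 + w 2 * v 2) := by
    intro w
    simp [cross_apply, Fin.sum_univ_three]
    ring
  have hQpos : 0 < ∑ i, (crossProduct ω v) i ^ 2 := by
    have h1 : crossProduct ω v ≠ 0 := hpar
    obtain ⟨k, hk⟩ := Function.ne_iff.mp h1
    exact Finset.sum_pos' (fun m _ => sq_nonneg _)
      ⟨k, Finset.mem_univ k, pow_two_pos_of_ne_zero hk⟩
  have hq : (ω 0 * ω 0 + ω 1 * ω 1 + ω 2 * ω 2) * (v 0 ^ 2 + v 1 ^ 2 + v 2 ^ 2) -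
      (ω 0 * v 0 + ω 1 * v 1 + ω 2 * v 2) * (ω 0 * v 0 + ω 1 * v 1 + ω 2 * v 2) ≠ 0 := by
    rw [← hcross ω]; exact ne_of_gt hQpos
  constructor
  · simp only [ξ, cross_apply, Fin.sum_univ_three, Pi.smul_apply, smul_eq_mul,
      Matrix.cons_val_zero, Matrix.cons_val_one, Matrix.head_cons, Matrix.cons_val_two,
      Matrix.tail_cons]
    ring
  · have hfun : ∀ i : Fin 3, (fun w => ξ w i) = auxF v i := by
      intro i
      funext y
      fin_cases i <;>
        · simp [ξ, auxF, cross_apply, Fin.sum_univ_three]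
          ring
    simp only [Fin.sum_univ_three]
    rw [hfun 0, hfun 1, hfun 2]
    rw [auxF_fderiv v ω hq 0 0]
    rw [auxF_fderiv v ω hq 0 1]
    rw [auxF_fderiv v ω hq 0 2]
    rw [auxF_fderiv v ω hq 1 0]
    rw [auxF_fderiv v ω hq 1 1]
    rw [auxF_fderiv v ω hq 1 2]
    rw [auxF_fderiv v ω hq 2 0]
    rw [auxF_fderiv v ω hq 2 1]
    rw [auxF_fderiv v ω hq 2 2]
    have hqp : ((ω 0 ^ 2 + ω 1 ^ 2 + ω 2 ^ 2) * (v 0 ^ 2 + v 1 ^ 2 + v 2 ^ 2) -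
        (ω 0 * v 0 + ω 1 * v 1 + ω 2 * v 2) ^ 2) ^ 2 ≠ 0 := by
      apply pow_ne_zero
      intro h
      apply hq
      rw [← h]; ring
    simp only [show ((0:Fin 3) = 0) = True by simp, show ((1:Fin 3) = 1) = True by simp,
      show ((2:Fin 3) = 2) = True by simp, show ((0:Fin 3) = 1) = False by decide,
      show ((0:Fin 3) = 2) = False by decide, show ((1:Fin 3) = 0) = False by decide,
      show ((1:Fin 3) = 2) = False by decide, show ((2:Fin 3) = 0) = False by decide,
      show ((2:Fin 3) = 1) = False by decide, if_true, if_false]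
    linear_combination div_self hqp
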